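/- The equation θ² + 2θ sin θ + 6(cos θ - 1) = 0 has a unique root θ₀ in the interval [π, 2π]. -/

import Mathlib

open Real

theorem stmt_2 :
    ∃! θ : ℝ, θ ∈ Set.Icc π (2 * π) ∧
      θ ^ 2 + 2 * θ * Real.sin θ + 6 * (Real.cos θ - 1) = 0 := by
  set f : ℝ → ℝ := fun θ => θ ^ 2 + 2 * θ * Real.sin θ + 6 * (Real.cos θ - 1) with hf
  have hcont : Continuous f := by
    apply Continuous.add
    apply Continuous.add
    · exact continuous_pow 2
    · exact (continuous_const.mul continuous_id).mul Real.continuous_sin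
    · exact continuous_const.mul (Real.continuous_cos.sub continuous_const)
  have hderiv : ∀ x : ℝ, HasDerivAt f
      (2 * x + (2 * Real.sin x + 2 * x * Real.cos x) + 6 * (-Real.sin x)) x := by
    intro x
    have h1 : HasDerivAt (fun θ : ℝ => θ ^ 2) (2 * x) x := by
      simpa using hasDerivAt_pow 2 x
    have h2 : HasDerivAt (fun θ : ℝ => 2 * θ * Real.sin θ)
        (2 * Real.sin x + 2 * x * Real.cos x) x := by
      have := ((hasDerivAt_id x).const_mul 2).mul (Real.hasDerivAt_sin x)
      simp only [id, mul_one] at this; exact this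
    have h3 : HasDerivAt (fun θ : ℝ => 6 * (Real.cos θ - 1)) (6 * (-Real.sin x)) x := by
      exact ((Real.hasDerivAt_cos x).sub_const 1).const_mul 6
    exact (h1.add h2).add h3
  have hpi := Real.pi_pos
  have hmono : StrictMonoOn f (Set.Icc π (2 * π)) := by
    apply strictMonoOn_of_deriv_pos (convex_Icc _ _) hcont.continuousOn
    intro x hx
    rw [interior_Icc] at hx
    rw [(hderiv x).deriv]
    have hsin : Real.sin x < 0 := by
      have : Real.sin (x - π) > 0 := Real.sin_pos_of_pos_of_lt_pi (by linarith [hx.1]) (by linarith [hx.2])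
      rw [Real.sin_sub_pi] at this
      linarith
    have hcos : -1 ≤ Real.cos x := Real.neg_one_le_cos x
    nlinarith [hx.1]
  have hfpi : f π ≤ 0 := by
    simp only [hf, Real.sin_pi, Real.cos_pi]
    nlinarith [Real.pi_lt_d2]
  have hf2pi : 0 ≤ f (2 * π) := by
    simp only [hf, Real.sin_two_pi, Real.cos_two_pi]
    nlinarith
  have hle : π ≤ 2 * π := by linarith
  have hivt := intermediate_value_Icc hle hcont.continuousOn
  obtain ⟨θ₀, hθ₀, hroot⟩ := hivt ⟨hfpi, hf2pi⟩
  refine ⟨θ₀, ⟨hθ₀, hroot⟩, ?_⟩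
  rintro θ ⟨hθ, hθroot⟩
  have : f θ = f θ₀ := by simp only [hf]; exact hθroot.trans hroot.symm
  exact hmono.injOn hθ hθ₀ this
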